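/- arXiv:0809.1473 — 8 statements merged into one kernel-verified Lean document; each statement's English description precedes it below -/
import Mathlib

section
/- Let d ≥ 1, let S be a finite set of points in ℝ^d, let k be an integer with 1 ≤ k ≤ |S|, and let A be a k-element subset of S. Set p = Σ_{s∈A} s. Then the normal cone of the unordered k-set polytope Q_k(S) at p equals the set of all c ∈ ℝ^d satisfying ⟨c,s⟩ ≥ ⟨c,s'⟩ for every s ∈ A and every s' ∈ S \ A; that is, N_{Q_k(S)}(p) = {c ∈ ℝ^d : ∀ s ∈ A, ∀ s' ∈ S \ A, ⟨c,s⟩ ≥ ⟨c,s'⟩}. -/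
open scoped RealInnerProductSpace Pointwise
open MeasureTheory

attribute [local instance] Classical.decEq

noncomputable section

abbrev E (d : ℕ) := EuclideanSpace ℝ (Fin d)

/-- The unordered k-set polytope `Q_k(S)`: convex hull of the points `∑_{s ∈ A} s`
where `A` ranges over k-element subsets of `S`. -/
def unorderedKSetPolytope (d k : ℕ) (S : Finset (E d)) : Set (E d) :=
  convexHull ℝ {p | ∃ A : Finset (E d), A ⊆ S ∧ A.card = k ∧ p = ∑ s ∈ A, s}

/-- The ordered k-set polytope `P_k(S)`: convex hull of the points
`∑_{i=1}^k (k+1-i) • σ(i)` (here `σ` is 0-indexed, so the weight of `σ i` is `k - i`)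
where `σ` ranges over injective maps from `{1,…,k}` into `S`. -/
def orderedKSetPolytope (d k : ℕ) (S : Finset (E d)) : Set (E d) :=
  convexHull ℝ {p | ∃ σ : Fin k → E d, Function.Injective σ ∧ (∀ i, σ i ∈ S) ∧
    p = ∑ i : Fin k, ((k - (i : ℕ) : ℕ) : ℝ) • σ i}

/-- The normal cone of a set `P` at a point `p`. -/
def normalCone {d : ℕ} (P : Set (E d)) (p : E d) : Set (E d) :=
  {c | ∀ x ∈ P, ⟪c, x⟫ ≤ ⟪c, p⟫}


lemma sum_le_sum_of_pairwise {α : Type*} (T U : Finset α) (f : α → ℝ)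
    (h : T.card = U.card) (hle : ∀ t ∈ T, ∀ u ∈ U, f t ≤ f u) :
    ∑ t ∈ T, f t ≤ ∑ u ∈ U, f u := by
  have e := Finset.equivOfCardEq h
  rw [← Finset.sum_coe_sort T f, ← Finset.sum_coe_sort U f,
    ← Equiv.sum_comp e (fun u => f (u : α))]
  exact Finset.sum_le_sum fun t _ => hle t t.2 (e t) (e t).2

/-- The normal cone of the unordered k-set polytope at `∑_{s ∈ A} s` is the set of
vectors `c` with `⟨c,s⟩ ≥ ⟨c,s'⟩` for all `s ∈ A`, `s' ∈ S \ A`. -/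
theorem normalCone_unorderedKSetPolytope
    (d : ℕ) (hd : 1 ≤ d) (S : Finset (E d)) (k : ℕ) (hk1 : 1 ≤ k) (hk2 : k ≤ S.card)
    (A : Finset (E d)) (hAS : A ⊆ S) (hA : A.card = k) :
    normalCone (unorderedKSetPolytope d k S) (∑ s ∈ A, s) =
      {c : E d | ∀ s ∈ A, ∀ s' ∈ S \ A, ⟪c, s'⟫ ≤ ⟪c, s⟫} := by
  ext c
  simp only [normalCone, Set.mem_setOf_eq]
  constructor
  · intro hc s hs s' hs'
    have hs'S : s' ∈ S := (Finset.mem_sdiff.mp hs').1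
    have hs'A : s' ∉ A := (Finset.mem_sdiff.mp hs').2
    have hs'e : s' ∉ A.erase s := fun h => hs'A (Finset.mem_of_mem_erase h)
    set B := insert s' (A.erase s) with hB
    have hBS : B ⊆ S := by
      intro x hx
      rcases Finset.mem_insert.mp hx with h | h
      · exact h ▸ hs'S
      · exact hAS (Finset.mem_of_mem_erase h)
    have hBcard : B.card = k := by
      rw [hB, Finset.card_insert_of_notMem hs'e, Finset.card_erase_of_mem hs, hA]
      omega
    have hq : (∑ x ∈ B, x) ∈ unorderedKSetPolytope d k S :=
      subset_convexHull ℝ _ ⟨B, hBS, hBcard, rfl⟩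
    have h1 := hc _ hq
    rw [hB, Finset.sum_insert hs'e, Finset.sum_erase_eq_sub hs,
      inner_add_right, inner_sub_right] at h1
    linarith
  · intro hc
    suffices h : unorderedKSetPolytope d k S ⊆ {x | ⟪c, x⟫ ≤ ⟪c, ∑ s ∈ A, s⟫} by
      intro x hx; exact h hx
    apply convexHull_min _ (convex_halfSpace_le
      ⟨fun x y => inner_add_right c x y, fun a x => real_inner_smul_right c x a⟩ _)
    rintro p ⟨B, hBS, hBk, rfl⟩
    simp only [Set.mem_setOf_eq, inner_sum]
    have hsplitB : ∑ x ∈ B \ A, ⟪c, x⟫ + ∑ x ∈ B ∩ A, ⟪c, x⟫ = ∑ x ∈ B, ⟪c, x⟫ := by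
      rw [← Finset.sdiff_inter_self_left B A]
      exact Finset.sum_sdiff Finset.inter_subset_left
    have hsplitA : ∑ x ∈ A \ B, ⟪c, x⟫ + ∑ x ∈ A ∩ B, ⟪c, x⟫ = ∑ x ∈ A, ⟪c, x⟫ := by
      rw [← Finset.sdiff_inter_self_left A B]
      exact Finset.sum_sdiff Finset.inter_subset_left
    have hcardeq : (B \ A).card = (A \ B).card := by
      rw [Finset.card_sdiff_comm]; omega
    have hinter : ∑ x ∈ B ∩ A, ⟪c, x⟫ = ∑ x ∈ A ∩ B, ⟪c, x⟫ := by
      rw [Finset.inter_comm]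
    have hkey : ∑ x ∈ B \ A, ⟪c, x⟫ ≤ ∑ x ∈ A \ B, ⟪c, x⟫ := by
      apply sum_le_sum_of_pairwise _ _ _ hcardeq
      intro t ht u hu
      exact hc u (Finset.mem_sdiff.mp hu).1
        t (Finset.mem_sdiff.mpr ⟨hBS (Finset.mem_sdiff.mp ht).1, (Finset.mem_sdiff.mp ht).2⟩)
    linarith

end
end

section
/- Let d ≥ 1, let S be a finite set of points in ℝ^d, let k be an integer with 1 ≤ k ≤ |S|, and let σ : {1,…,k} → S be injective. Set p = Σ_{i=1}^k (k+1−i)·σ(i). Then the normal cone of the ordered k-set polytope P_k(S) at p equals the set of all c ∈ ℝ^d satisfying ⟨c,σ(1)⟩ ≥ ⟨c,σ(2)⟩ ≥ … ≥ ⟨c,σ(k)⟩ and ⟨c,σ(k)⟩ ≥ ⟨c,s⟩ for all s ∈ S not in the image of σ. -/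
open scoped RealInnerProductSpace Pointwise
open MeasureTheory

attribute [local instance] Classical.decEq

noncomputable section

/-- Abel-type summation identity. -/
lemma abel_sum (a : ℕ → ℝ) (k : ℕ) :
    ∑ i ∈ Finset.range k, ((k - i : ℕ) : ℝ) * a i
      = ∑ m ∈ Finset.range k, ∑ i ∈ Finset.range (m + 1), a i := by
  induction k with
  | zero => simp
  | succ k ih =>
    rw [Finset.sum_range_succ (f := fun m => ∑ i ∈ Finset.range (m + 1), a i), ← ih]
    have hcong : ∀ i ∈ Finset.range (k + 1),
        ((k + 1 - i : ℕ) : ℝ) * a i = ((k - i : ℕ) : ℝ) * a i + a i := by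
      intro i hi
      simp only [Finset.mem_range] at hi
      have h : (k + 1 - i : ℕ) = (k - i) + 1 := by omega
      rw [h]; push_cast; ring
    rw [Finset.sum_congr rfl hcong, Finset.sum_add_distrib,
      Finset.sum_range_succ (f := fun i => ((k - i : ℕ) : ℝ) * a i)]
    simp

/-- Sum of `f` over any `m` distinct elements of `S` is at most the sum over the
first `m` values of the sorted list `σ`. -/
lemma topSum {α : Type*} [DecidableEq α] (f : α → ℝ) (S : Finset α) {k : ℕ}
    (σ : Fin k → α) (hinj : Function.Injective σ) (hS : ∀ i, σ i ∈ S)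
    (hmono : ∀ i j : Fin k, i ≤ j → f (σ j) ≤ f (σ i))
    (hout : ∀ s ∈ S, s ∉ Set.range σ → ∀ i : Fin k, f s ≤ f (σ i))
    {m : ℕ} (hm : m ≤ k) (τ : Fin m → α) (hτinj : Function.Injective τ)
    (hτS : ∀ i, τ i ∈ S) :
    ∑ i, f (τ i) ≤ ∑ i : Fin m, f (σ (Fin.castLE hm i)) := by
  rcases Nat.eq_zero_or_pos m with h0 | hpos
  · subst h0; simp
  have hLlt : m - 1 < k := by omega
  set L : Fin k := ⟨m - 1, hLlt⟩ with hL
  have hBinj : Function.Injective (fun i : Fin m => σ (Fin.castLE hm i)) :=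
    fun a b h => Fin.castLE_injective hm (hinj h)
  set A := Finset.image τ Finset.univ with hAdef
  set B := Finset.image (fun i : Fin m => σ (Fin.castLE hm i)) Finset.univ with hBdef
  have hA : ∑ i, f (τ i) = ∑ x ∈ A, f x :=
    (Finset.sum_image (fun a _ b _ h => hτinj h)).symm
  have hB : ∑ i : Fin m, f (σ (Fin.castLE hm i)) = ∑ x ∈ B, f x :=
    (Finset.sum_image (fun a _ b _ h => hBinj h)).symm
  rw [hA, hB]
  have hcard : (A \ B).card = (B \ A).card := by
    apply Finset.card_sdiff_comm
    rw [hAdef, hBdef, Finset.card_image_of_injective _ hτinj,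
      Finset.card_image_of_injective _ hBinj]
  have hAB : ∀ x ∈ A \ B, f x ≤ f (σ L) := by
    intro x hx
    rw [Finset.mem_sdiff] at hx
    obtain ⟨hxA, hxB⟩ := hx
    rw [hAdef, Finset.mem_image] at hxA
    obtain ⟨i, _, rfl⟩ := hxA
    by_cases hr : τ i ∈ Set.range σ
    · obtain ⟨j, hj⟩ := hr
      have hjm : m ≤ j.val := by
        by_contra hcon
        push_neg at hcon
        apply hxB
        rw [hBdef, Finset.mem_image]
        exact ⟨⟨j.val, hcon⟩, Finset.mem_univ _, by rw [← hj]; congr 1⟩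
      rw [← hj]
      exact hmono L j (by simp only [hL, Fin.le_def]; omega)
    · exact hout (τ i) (hτS i) hr L
  have hBA : ∀ x ∈ B \ A, f (σ L) ≤ f x := by
    intro x hx
    rw [Finset.mem_sdiff] at hx
    obtain ⟨hxB, _⟩ := hx
    rw [hBdef, Finset.mem_image] at hxB
    obtain ⟨i, _, rfl⟩ := hxB
    exact hmono (Fin.castLE hm i) L (by simp only [hL, Fin.le_def, Fin.coe_castLE]; omega)
  have key : ∑ x ∈ A \ B, f x ≤ ∑ x ∈ B \ A, f x := by
    calc ∑ x ∈ A \ B, f x ≤ (A \ B).card • f (σ L) :=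
          Finset.sum_le_card_nsmul _ _ _ hAB
      _ = (B \ A).card • f (σ L) := by rw [hcard]
      _ ≤ ∑ x ∈ B \ A, f x := Finset.card_nsmul_le_sum _ _ _ hBA
  have e1 := Finset.sum_inter_add_sum_sdiff A B f
  have e2 := Finset.sum_inter_add_sum_sdiff B A f
  rw [Finset.inter_comm] at e2
  linarith

/-- The normal cone of the ordered k-set polytope at `∑_i (k+1-i) • σ(i)` is the set of
vectors `c` with `⟨c,σ(1)⟩ ≥ … ≥ ⟨c,σ(k)⟩` and `⟨c,σ(k)⟩ ≥ ⟨c,s⟩` for `s ∈ S` outside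
the image of `σ`. -/
theorem normalCone_orderedKSetPolytope
    (d : ℕ) (hd : 1 ≤ d) (S : Finset (E d)) (k : ℕ) (hk1 : 1 ≤ k) (hk2 : k ≤ S.card)
    (σ : Fin k → E d) (hσinj : Function.Injective σ) (hσS : ∀ i, σ i ∈ S) :
    normalCone (orderedKSetPolytope d k S) (∑ i : Fin k, ((k - (i : ℕ) : ℕ) : ℝ) • σ i) =
      {c : E d | (∀ i j : Fin k, i ≤ j → ⟪c, σ j⟫ ≤ ⟪c, σ i⟫) ∧
        ∀ s ∈ S, s ∉ Set.range σ → ⟪c, s⟫ ≤ ⟪c, σ ⟨k - 1, by omega⟩⟫} := by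
  classical
  have hLk : k - 1 < k := by omega
  ext c
  simp only [normalCone, Set.mem_setOf_eq]
  constructor
  · intro hc
    have key : ∀ σ' : Fin k → E d, Function.Injective σ' → (∀ i, σ' i ∈ S) →
        ∑ i : Fin k, ((k - (i : ℕ) : ℕ) : ℝ) * ⟪c, σ' i⟫
          ≤ ∑ i : Fin k, ((k - (i : ℕ) : ℕ) : ℝ) * ⟪c, σ i⟫ := by
      intro σ' h1 h2
      have hx : (∑ i : Fin k, ((k - (i : ℕ) : ℕ) : ℝ) • σ' i) ∈ orderedKSetPolytope d k S :=
        subset_convexHull ℝ _ ⟨σ', h1, h2, rfl⟩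
      have h0 := hc _ hx
      simp only [inner_sum, real_inner_smul_right] at h0
      exact h0
    constructor
    · intro i j hij
      rcases eq_or_lt_of_le hij with rfl | hlt
      · exact le_refl _
      set w : Fin k → ℝ := fun x => ((k - (x : ℕ) : ℕ) : ℝ) with hw
      have h := key (σ ∘ Equiv.swap i j) (hσinj.comp (Equiv.swap i j).injective)
        (fun x => hσS _)
      simp only [Function.comp_apply] at h
      have e1 : ∑ x : Fin k, w x * ⟪c, σ (Equiv.swap i j x)⟫
          = ∑ x : Fin k, w (Equiv.swap i j x) * ⟪c, σ x⟫ := by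
        rw [← Equiv.sum_comp (Equiv.swap i j)
          (fun x => w (Equiv.swap i j x) * ⟪c, σ x⟫)]
        simp [Equiv.swap_apply_self]
      rw [e1] at h
      have h2 : ∑ x : Fin k, (w (Equiv.swap i j x) - w x) * ⟪c, σ x⟫ ≤ 0 := by
        simp only [sub_mul, Finset.sum_sub_distrib]
        linarith
      have h3 : ∑ x : Fin k, (w (Equiv.swap i j x) - w x) * ⟪c, σ x⟫
          = (w j - w i) * ⟪c, σ i⟫ + (w i - w j) * ⟪c, σ j⟫ := by
        rw [← Finset.sum_subset (Finset.subset_univ ({i, j} : Finset (Fin k)))]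
        · rw [Finset.sum_pair hlt.ne]
          rw [Equiv.swap_apply_left, Equiv.swap_apply_right]
        · intro x _ hx
          simp only [Finset.mem_insert, Finset.mem_singleton, not_or] at hx
          rw [Equiv.swap_apply_of_ne_of_ne hx.1 hx.2, sub_self, zero_mul]
      have hij' : (i : ℕ) < (j : ℕ) := hlt
      have hwd : w i - w j = ((j : ℕ) : ℝ) - ((i : ℕ) : ℝ) := by
        simp only [hw]
        rw [Nat.cast_sub (le_of_lt i.isLt), Nat.cast_sub (le_of_lt j.isLt)]
        ring
      have hpos : 0 < w i - w j := by
        rw [hwd]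
        have : ((i : ℕ) : ℝ) < ((j : ℕ) : ℝ) := by exact_mod_cast hij'
        linarith
      nlinarith [h2, h3.symm.trans_le h2]
    · intro s hs hsr
      set L : Fin k := ⟨k - 1, hLk⟩ with hL
      set σ' : Fin k → E d := fun x => if x = L then s else σ x with hσ'
      have hinj' : Function.Injective σ' := by
        intro a b hab
        simp only [hσ'] at hab
        by_cases ha : a = L
        · by_cases hb : b = L
          · rw [ha, hb]
          · rw [if_pos ha, if_neg hb] at hab
            exact absurd ⟨b, hab.symm⟩ hsr
        · by_cases hb : b = L
          · rw [if_neg ha, if_pos hb] at hab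
            exact absurd ⟨a, hab⟩ hsr
          · rw [if_neg ha, if_neg hb] at hab
            exact hσinj hab
      have hS' : ∀ x, σ' x ∈ S := by
        intro x
        by_cases hx : x = L <;> simp [hσ', hx, hs, hσS]
      have h := key σ' hinj' hS'
      have h3 : ∑ x : Fin k, ((k - (x : ℕ) : ℕ) : ℝ) * ⟪c, σ' x⟫
            - ∑ x : Fin k, ((k - (x : ℕ) : ℕ) : ℝ) * ⟪c, σ x⟫
          = ((k - (L : ℕ) : ℕ) : ℝ) * (⟪c, s⟫ - ⟪c, σ L⟫) := by
        rw [← Finset.sum_sub_distrib]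
        rw [← Finset.sum_subset (Finset.subset_univ ({L} : Finset (Fin k)))]
        · rw [Finset.sum_singleton]
          simp only [hσ', if_pos rfl]
          ring
        · intro x _ hx
          simp only [Finset.mem_singleton] at hx
          simp [hσ', hx]
      have hone : ((k - (L : ℕ) : ℕ) : ℝ) = 1 := by
        have : (k - (L : ℕ) : ℕ) = 1 := by simp only [hL]; omega
        rw [this]; norm_num
      rw [hone, one_mul] at h3
      have : ⟪c, s⟫ - ⟪c, σ L⟫ ≤ 0 := by linarith
      have hgoal : ⟪c, s⟫ ≤ ⟪c, σ L⟫ := by linarith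
      exact hgoal
  · rintro ⟨h1, h2⟩ x hx
    set L : Fin k := ⟨k - 1, hLk⟩ with hL
    have hout : ∀ s ∈ S, s ∉ Set.range σ → ∀ i : Fin k, ⟪c, s⟫ ≤ ⟪c, σ i⟫ := by
      intro s hs hr i
      refine le_trans (h2 s hs hr) (h1 i ⟨k - 1, by omega⟩ ?_)
      simp only [Fin.le_def]
      omega
    have hgen : ∀ σ' : Fin k → E d, Function.Injective σ' → (∀ i, σ' i ∈ S) →
        ⟪c, ∑ i : Fin k, ((k - (i : ℕ) : ℕ) : ℝ) • σ' i⟫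
          ≤ ⟪c, ∑ i : Fin k, ((k - (i : ℕ) : ℕ) : ℝ) • σ i⟫ := by
      intro σ' hinj' hS'
      simp only [inner_sum, real_inner_smul_right]
      set a : ℕ → ℝ := fun n => if h : n < k then ⟪c, σ ⟨n, h⟩⟫ else 0 with ha
      set a' : ℕ → ℝ := fun n => if h : n < k then ⟪c, σ' ⟨n, h⟩⟫ else 0 with ha'
      have ea : ∑ i : Fin k, ((k - (i : ℕ) : ℕ) : ℝ) * ⟪c, σ i⟫
          = ∑ i ∈ Finset.range k, ((k - i : ℕ) : ℝ) * a i := by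
        rw [Finset.sum_range (f := fun n => ((k - n : ℕ) : ℝ) * a n)]
        apply Finset.sum_congr rfl
        intro i _
        simp only [ha]
        rw [dif_pos i.isLt]
      have ea' : ∑ i : Fin k, ((k - (i : ℕ) : ℕ) : ℝ) * ⟪c, σ' i⟫
          = ∑ i ∈ Finset.range k, ((k - i : ℕ) : ℝ) * a' i := by
        rw [Finset.sum_range (f := fun n => ((k - n : ℕ) : ℝ) * a' n)]
        apply Finset.sum_congr rfl
        intro i _
        simp only [ha']
        rw [dif_pos i.isLt]
      rw [ea, ea', abel_sum, abel_sum]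
      apply Finset.sum_le_sum
      intro m hm
      have hmk : m + 1 ≤ k := Finset.mem_range.1 hm
      have eb : ∑ i ∈ Finset.range (m + 1), a' i
          = ∑ i : Fin (m + 1), ⟪c, σ' (Fin.castLE hmk i)⟫ := by
        rw [Finset.sum_range (f := fun n => a' n)]
        apply Finset.sum_congr rfl
        intro i _
        simp only [ha']
        rw [dif_pos (lt_of_lt_of_le i.isLt hmk)]
        congr 1
      have ec : ∑ i ∈ Finset.range (m + 1), a i
          = ∑ i : Fin (m + 1), ⟪c, σ (Fin.castLE hmk i)⟫ := by
        rw [Finset.sum_range (f := fun n => a n)]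
        apply Finset.sum_congr rfl
        intro i _
        simp only [ha]
        rw [dif_pos (lt_of_lt_of_le i.isLt hmk)]
        congr 1
      rw [eb, ec]
      exact topSum (fun x => ⟪c, x⟫) S σ hσinj hσS h1 hout hmk
        (fun i => σ' (Fin.castLE hmk i))
        (fun a b h => Fin.castLE_injective hmk (hinj' h))
        (fun i => hS' _)
    have hsub : orderedKSetPolytope d k S
        ⊆ {y | ⟪c, y⟫ ≤ ⟪c, ∑ i : Fin k, ((k - (i : ℕ) : ℕ) : ℝ) • σ i⟫} := by
      apply convexHull_min
      · rintro y ⟨σ', hinj', hS', rfl⟩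
        exact hgen σ' hinj' hS'
      · exact convex_halfSpace_le
          ⟨fun a b => inner_add_right c a b, fun r a => real_inner_smul_right c a r⟩ _
    exact hsub hx

end
end

section
/- Let d ≥ 1, let S be a finite set of points in ℝ^d, let k be an integer with 1 ≤ k ≤ |S|, let A be a k-element subset of S, and let c ∈ ℝ^d. Then ⟨c,s⟩ > ⟨c,s'⟩ for every s ∈ A and every s' ∈ S \ A if and only if p = Σ_{s∈A} s is the unique maximizer of the linear functional x ↦ ⟨c,x⟩ over the unordered k-set polytope Q_k(S), i.e. ⟨c,p⟩ > ⟨c,x⟩ for every x ∈ Q_k(S) with x ≠ p. -/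
open scoped RealInnerProductSpace Pointwise
open MeasureTheory

attribute [local instance] Classical.decEq

noncomputable section

/-- `⟨c,s⟩ > ⟨c,s'⟩` for all `s ∈ A`, `s' ∈ S \ A` iff `∑_{s ∈ A} s` is the unique
maximizer of `x ↦ ⟨c,x⟩` over the unordered k-set polytope. -/
theorem strict_separation_iff_unique_max_unordered
    (d : ℕ) (hd : 1 ≤ d) (S : Finset (E d)) (k : ℕ) (hk1 : 1 ≤ k) (hk2 : k ≤ S.card)
    (A : Finset (E d)) (hAS : A ⊆ S) (hA : A.card = k) (c : E d) :
    (∀ s ∈ A, ∀ s' ∈ S \ A, ⟪c, s'⟫ < ⟪c, s⟫) ↔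
      (∀ x ∈ unorderedKSetPolytope d k S, x ≠ ∑ s ∈ A, s → ⟪c, x⟫ < ⟪c, ∑ s ∈ A, s⟫) := by
  set p : E d := ∑ s ∈ A, s with hp
  constructor
  · intro h x hx hne
    -- key: for any other k-subset B, the value at ∑ B is strictly smaller
    have key : ∀ B : Finset (E d), B ⊆ S → B.card = k → B ≠ A →
        ⟪c, ∑ s ∈ B, s⟫ < ⟪c, p⟫ := by
      intro B hBS hBk hBA
      have hcard : (B \ A).card = (A \ B).card :=
        Finset.card_sdiff_comm (by omega)
      have hne' : (B \ A).Nonempty := by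
        rw [Finset.sdiff_nonempty]
        intro hsub
        exact hBA (Finset.eq_of_subset_of_card_le hsub (by omega))
      have hABne : (A \ B).Nonempty := by
        rw [← Finset.card_pos, ← hcard, Finset.card_pos]; exact hne'
      obtain ⟨s0, hs0, hmin⟩ :=
        Finset.exists_min_image (A \ B) (fun s => (⟪c, s⟫ : ℝ)) hABne
      have hs0A : s0 ∈ A := (Finset.mem_sdiff.mp hs0).1
      have h1 : ∑ s ∈ B \ A, (⟪c, s⟫ : ℝ) < ∑ _s ∈ B \ A, (⟪c, s0⟫ : ℝ) := by
        refine Finset.sum_lt_sum_of_nonempty hne' (fun s' hs' => ?_)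
        have hs'' := Finset.mem_sdiff.mp hs'
        exact h s0 hs0A s' (Finset.mem_sdiff.mpr ⟨hBS hs''.1, hs''.2⟩)
      have h2 : ∑ _s ∈ B \ A, (⟪c, s0⟫ : ℝ) = ∑ _s ∈ A \ B, (⟪c, s0⟫ : ℝ) := by
        rw [Finset.sum_const, Finset.sum_const, hcard]
      have h3 : ∑ _s ∈ A \ B, (⟪c, s0⟫ : ℝ) ≤ ∑ s ∈ A \ B, (⟪c, s⟫ : ℝ) :=
        Finset.sum_le_sum hmin
      have hBsplit : ∑ s ∈ B ∩ A, (⟪c, s⟫ : ℝ) + ∑ s ∈ B \ A, (⟪c, s⟫ : ℝ)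
          = ∑ s ∈ B, (⟪c, s⟫ : ℝ) := Finset.sum_inter_add_sum_sdiff _ _ _
      have hAsplit : ∑ s ∈ A ∩ B, (⟪c, s⟫ : ℝ) + ∑ s ∈ A \ B, (⟪c, s⟫ : ℝ)
          = ∑ s ∈ A, (⟪c, s⟫ : ℝ) := Finset.sum_inter_add_sum_sdiff _ _ _
      have hcomm : B ∩ A = A ∩ B := Finset.inter_comm _ _
      have : ∑ s ∈ B, (⟪c, s⟫ : ℝ) < ∑ s ∈ A, (⟪c, s⟫ : ℝ) := by
        rw [← hBsplit, ← hAsplit, hcomm]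
        linarith
      rw [hp, inner_sum, inner_sum]
      exact this
    -- values at generators
    have hVle : ∀ q ∈ {q : E d | ∃ B : Finset (E d), B ⊆ S ∧ B.card = k ∧ q = ∑ s ∈ B, s},
        ⟪c, q⟫ ≤ ⟪c, p⟫ := by
      rintro q ⟨B, hBS, hBk, rfl⟩
      by_cases hBA : B = A
      · subst hBA; exact le_refl _
      · exact le_of_lt (key B hBS hBk hBA)
    have hVlt : ∀ q ∈ {q : E d | ∃ B : Finset (E d), B ⊆ S ∧ B.card = k ∧ q = ∑ s ∈ B, s},
        q ≠ p → ⟪c, q⟫ < ⟪c, p⟫ := by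
      rintro q ⟨B, hBS, hBk, rfl⟩ hqp
      by_cases hBA : B = A
      · subst hBA; exact absurd rfl hqp
      · exact key B hBS hBk hBA
    rw [unorderedKSetPolytope, convexHull_eq] at hx
    obtain ⟨ι, t, w, z, hw0, hw1, hz, hcm⟩ := hx
    rw [Finset.centerMass_eq_of_sum_1 _ _ hw1] at hcm
    have hfx : ⟪c, x⟫ = ∑ i ∈ t, w i * ⟪c, z i⟫ := by
      rw [← hcm, inner_sum]
      exact Finset.sum_congr rfl (fun i _ => real_inner_smul_right _ _ _)
    by_cases hex : ∃ i ∈ t, w i ≠ 0 ∧ z i ≠ p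
    · obtain ⟨i0, hi0t, hwi0, hzi0⟩ := hex
      have hlt : ∑ i ∈ t, w i * ⟪c, z i⟫ < ∑ i ∈ t, w i * ⟪c, p⟫ := by
        refine Finset.sum_lt_sum (fun i hi => ?_) ⟨i0, hi0t, ?_⟩
        · exact mul_le_mul_of_nonneg_left (hVle _ (hz i hi)) (hw0 i hi)
        · have := hVlt _ (hz i0 hi0t) hzi0
          have hw' : 0 < w i0 := lt_of_le_of_ne (hw0 i0 hi0t) (Ne.symm hwi0)
          exact mul_lt_mul_of_pos_left this hw'
      calc ⟪c, x⟫ = ∑ i ∈ t, w i * ⟪c, z i⟫ := hfx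
        _ < ∑ i ∈ t, w i * ⟪c, p⟫ := hlt
        _ = ⟪c, p⟫ := by rw [← Finset.sum_mul, hw1, one_mul]
    · push_neg at hex
      exfalso
      apply hne
      have : x = ∑ i ∈ t, w i • p := by
        rw [← hcm]
        refine Finset.sum_congr rfl (fun i hi => ?_)
        by_cases hw : w i = 0
        · simp [hw]
        · rw [hex i hi hw]
      rw [this, ← Finset.sum_smul, hw1, one_smul]
  · intro h s hs s' hs'
    obtain ⟨hs'S, hs'A⟩ := Finset.mem_sdiff.mp hs'
    have hsne : s ≠ s' := fun e => hs'A (e ▸ hs)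
    have hs'ne : s' ∉ A.erase s := fun hmem => hs'A (Finset.mem_of_mem_erase hmem)
    set B : Finset (E d) := insert s' (A.erase s) with hB
    have hBS : B ⊆ S := by
      rw [hB, Finset.insert_subset_iff]
      exact ⟨hs'S, (Finset.erase_subset _ _).trans hAS⟩
    have hBk : B.card = k := by
      rw [hB, Finset.card_insert_of_notMem hs'ne, Finset.card_erase_of_mem hs]
      omega
    have hBsum : ∑ x ∈ B, x = s' + (p - s) := by
      rw [hB, Finset.sum_insert hs'ne]
      congr 1
      have := Finset.sum_erase_add A id hs
      simpa [eq_sub_iff_add_eq] using this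
    have hmem : ∑ x ∈ B, x ∈ unorderedKSetPolytope d k S :=
      subset_convexHull ℝ _ ⟨B, hBS, hBk, rfl⟩
    have hxne : ∑ x ∈ B, x ≠ p := by
      rw [hBsum]
      intro hcontra
      have h4 : s' + p = s + p := by
        calc s' + p = s' + (p - s) + s := by abel
          _ = p + s := by rw [hcontra]
          _ = s + p := by abel
      exact hsne (add_right_cancel h4).symm
    have := h _ hmem hxne
    rw [hBsum, inner_add_right, inner_sub_right] at this
    linarith

end
end

section
/- Let d ≥ 1, let S be a finite set of points in ℝ^d, let k be an integer with 1 ≤ k ≤ |S|, and let A be a k-element subset of S. Then p = Σ_{s∈A} s is an extreme point of the unordered k-set polytope Q_k(S) if and only if there exists c ∈ ℝ^d with ⟨c,s⟩ > ⟨c,s'⟩ for every s ∈ A and every s' ∈ S \ A. -/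
open scoped RealInnerProductSpace Pointwise
open MeasureTheory

attribute [local instance] Classical.decEq

noncomputable section

/-- If `A` is separated from `S \ A` by `c`, then the sum over any other subset `B ⊆ S`
of the same cardinality has strictly smaller inner product with `c`. -/
lemma key_sum_lt {d : ℕ} (c : E d) (S A B : Finset (E d)) (hAS : A ⊆ S) (hBS : B ⊆ S)
    (hcard : B.card = A.card) (hne : B ≠ A)
    (hsep : ∀ s ∈ A, ∀ s' ∈ S \ A, ⟪c, s'⟫ < ⟪c, s⟫) :
    ⟪c, ∑ s ∈ B, s⟫ < ⟪c, ∑ s ∈ A, s⟫ := by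
  classical
  set g : E d → ℝ := fun x => ⟪c, x⟫ with hg
  have hAsplit : ∑ x ∈ A \ B, g x + ∑ x ∈ A ∩ B, g x = ∑ x ∈ A, g x := by
    rw [← Finset.sdiff_inter_self_left A B]
    exact Finset.sum_sdiff Finset.inter_subset_left
  have hBsplit : ∑ x ∈ B \ A, g x + ∑ x ∈ A ∩ B, g x = ∑ x ∈ B, g x := by
    rw [Finset.inter_comm, ← Finset.sdiff_inter_self_left B A]
    exact Finset.sum_sdiff Finset.inter_subset_left
  have hABne : (A \ B).Nonempty := by
    rw [Finset.sdiff_nonempty]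
    intro hsub
    exact hne (Finset.eq_of_subset_of_card_le hsub (le_of_eq hcard)).symm
  have hBAne : (B \ A).Nonempty := by
    rw [Finset.sdiff_nonempty]
    intro hsub
    exact hne (Finset.eq_of_subset_of_card_le hsub (le_of_eq hcard.symm))
  obtain ⟨s₀, hs₀, hmin⟩ := Finset.exists_min_image (A \ B) g hABne
  have hs₀A : s₀ ∈ A := (Finset.mem_sdiff.1 hs₀).1
  have hlt : ∀ x ∈ B \ A, g x < g s₀ := by
    intro x hx
    have hx' := Finset.mem_sdiff.1 hx
    exact hsep s₀ hs₀A x (Finset.mem_sdiff.2 ⟨hBS hx'.1, hx'.2⟩)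
  have h1 : ∑ x ∈ B \ A, g x < ∑ _x ∈ B \ A, g s₀ :=
    Finset.sum_lt_sum_of_nonempty hBAne hlt
  have h2 : ∑ _x ∈ A \ B, g s₀ ≤ ∑ x ∈ A \ B, g x :=
    Finset.sum_le_sum hmin
  have hcards : (B \ A).card = (A \ B).card := Finset.card_sdiff_comm hcard
  have h3 : ∑ _x ∈ B \ A, g s₀ = ∑ _x ∈ A \ B, g s₀ := by
    simp [Finset.sum_const, hcards]
  have hfinal : ∑ x ∈ B, g x < ∑ x ∈ A, g x := by linarith
  simpa [hg, inner_sum] using hfinal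

theorem extreme_not_mem_convexHull_diff {d : ℕ} {V : Set (E d)} {p : E d}
    (h : p ∈ Set.extremePoints ℝ (convexHull ℝ V)) : p ∉ convexHull ℝ (V \ {p}) := by
  intro hmem
  have hsub : convexHull ℝ V ⊆ convexHull ℝ (V \ {p}) := by
    apply convexHull_min _ (convex_convexHull ℝ _)
    intro v hv
    by_cases hvp : v = p
    · exact hvp ▸ hmem
    · exact subset_convexHull ℝ _ (Set.mem_diff_singleton.2 ⟨hv, hvp⟩)
  have h' : p ∈ Set.extremePoints ℝ (convexHull ℝ (V \ {p})) := by
    refine ⟨hmem, fun x₁ hx₁ x₂ hx₂ hseg => ?_⟩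
    exact h.2 (convexHull_mono Set.diff_subset hx₁)
      (convexHull_mono Set.diff_subset hx₂) hseg
  have := extremePoints_convexHull_subset h'
  exact this.2 rfl

/-- `∑_{s ∈ A} s` is an extreme point of the unordered k-set polytope iff `A` is
strictly linearly separable from its complement in `S`. -/
theorem extremePoint_iff_strict_separation_unordered
    (d : ℕ) (hd : 1 ≤ d) (S : Finset (E d)) (k : ℕ) (hk1 : 1 ≤ k) (hk2 : k ≤ S.card)
    (A : Finset (E d)) (hAS : A ⊆ S) (hA : A.card = k) :
    (∑ s ∈ A, s) ∈ Set.extremePoints ℝ (unorderedKSetPolytope d k S) ↔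
      ∃ c : E d, ∀ s ∈ A, ∀ s' ∈ S \ A, ⟪c, s'⟫ < ⟪c, s⟫ := by
  classical
  set V : Set (E d) := {p | ∃ A : Finset (E d), A ⊆ S ∧ A.card = k ∧ p = ∑ s ∈ A, s} with hV
  set p : E d := ∑ s ∈ A, s with hp
  have hQ : unorderedKSetPolytope d k S = convexHull ℝ V := rfl
  have hpV : p ∈ V := ⟨A, hAS, hA, rfl⟩
  constructor
  · -- extreme point → separation
    intro h
    rw [hQ] at h
    have hnot : p ∉ convexHull ℝ (V \ {p}) := extreme_not_mem_convexHull_diff h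
    -- V is finite
    have hVfin : V.Finite := by
      apply Set.Finite.subset
        (Finset.finite_toSet ((S.powersetCard k).image fun B => ∑ s ∈ B, s))
      rintro x ⟨B, hBS, hBcard, rfl⟩
      simp only [Finset.coe_image, Set.mem_image, Finset.mem_coe, Finset.mem_powersetCard]
      exact ⟨B, ⟨hBS, hBcard⟩, rfl⟩
    have hclosed : IsClosed (convexHull ℝ (V \ {p})) :=
      ((hVfin.diff (t := {p})).isCompact_convexHull (𝕜 := ℝ)).isClosed
    obtain ⟨f, u, hfu, hup⟩ :=
      geometric_hahn_banach_closed_point (convex_convexHull ℝ _) hclosed hnot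
    refine ⟨(InnerProductSpace.toDual ℝ (E d)).symm f, ?_⟩
    intro s hs s' hs'
    rw [Finset.mem_sdiff] at hs'
    set B : Finset (E d) := insert s' (A.erase s) with hB
    have hs'nm : s' ∉ A.erase s := fun hmem => hs'.2 (Finset.mem_of_mem_erase hmem)
    have hBS : B ⊆ S := by
      intro x hx
      rcases Finset.mem_insert.1 hx with rfl | hx
      · exact hs'.1
      · exact hAS (Finset.mem_of_mem_erase hx)
    have hBcard : B.card = k := by
      rw [hB, Finset.card_insert_of_notMem hs'nm, Finset.card_erase_of_mem hs, hA]
      omega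
    have hsumB : ∑ x ∈ B, x = s' + ∑ x ∈ A.erase s, x := by
      rw [hB, Finset.sum_insert hs'nm]
    have hsumA : ∑ x ∈ A.erase s, x + s = p := by
      rw [hp]; exact Finset.sum_erase_add A _ hs
    have hne : (∑ x ∈ B, x) ≠ p := by
      intro heq
      have : s' = s := by
        have := heq
        rw [hsumB, ← hsumA] at this
        have h2 : s' + ∑ x ∈ A.erase s, x - ∑ x ∈ A.erase s, x
            = ∑ x ∈ A.erase s, x + s - ∑ x ∈ A.erase s, x := by rw [this]
        simpa using h2
      exact hs'.2 (this ▸ hs)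
    have hmemdiff : (∑ x ∈ B, x) ∈ V \ {p} :=
      ⟨⟨B, hBS, hBcard, rfl⟩, hne⟩
    have hlt : f (∑ x ∈ B, x) < f p :=
      lt_trans (hfu _ (subset_convexHull ℝ _ hmemdiff)) hup
    have hfB : f (∑ x ∈ B, x) = f s' + ∑ x ∈ A.erase s, f x := by
      rw [hsumB, map_add, map_sum]
    have hfA : (∑ x ∈ A.erase s, f x) + f s = f p := by
      rw [← hsumA, map_add, map_sum]
    have hfs : f s' < f s := by
      rw [hfB, ← hfA] at hlt; linarith
    simpa [InnerProductSpace.toDual_symm_apply] using hfs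
  · -- separation → extreme point
    rintro ⟨c, hc⟩
    rw [hQ]
    have key : ∀ v ∈ V, v ≠ p → ⟪c, v⟫ < ⟪c, p⟫ := by
      rintro v ⟨B, hBS, hBcard, rfl⟩ hne
      have hBA : B ≠ A := fun h => hne (by rw [h])
      exact key_sum_lt c S A B hAS hBS (by rw [hBcard, hA]) hBA hc
    have keyle : ∀ v ∈ V, ⟪c, v⟫ ≤ ⟪c, p⟫ := by
      intro v hv
      by_cases hvp : v = p
      · rw [hvp]
      · exact le_of_lt (key v hv hvp)
    have hle : ∀ x ∈ convexHull ℝ V, ⟪c, x⟫ ≤ ⟪c, p⟫ := by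
      intro x hx
      have hconv : Convex ℝ {x : E d | ⟪c, x⟫ ≤ ⟪c, p⟫} := by
        apply convex_halfSpace_le
        exact ⟨fun x y => inner_add_right c x y, fun r x => real_inner_smul_right c x r⟩
      exact convexHull_min keyle hconv hx
    have uniq : ∀ x ∈ convexHull ℝ V, ⟪c, x⟫ = ⟪c, p⟫ → x = p := by
      intro x hx hxe
      rw [convexHull_eq] at hx
      obtain ⟨ι, t, w, z, hw0, hw1, hzV, hcm⟩ := hx
      rw [Finset.centerMass_eq_of_sum_1 _ _ hw1] at hcm
      by_cases hall : ∀ i ∈ t, w i ≠ 0 → z i = p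
      · rw [← hcm]
        have : ∀ i ∈ t, w i • z i = w i • p := by
          intro i hi
          by_cases hwi : w i = 0
          · simp [hwi]
          · rw [hall i hi hwi]
        rw [Finset.sum_congr rfl this, ← Finset.sum_smul, hw1, one_smul]
      · exfalso
        push_neg at hall
        obtain ⟨i₀, hi₀t, hwi₀, hzi₀⟩ := hall
        have hwi₀pos : 0 < w i₀ := lt_of_le_of_ne (hw0 i₀ hi₀t) (Ne.symm hwi₀)
        have hxinner : ⟪c, x⟫ = ∑ i ∈ t, w i * ⟪c, z i⟫ := by
          rw [← hcm, inner_sum]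
          exact Finset.sum_congr rfl fun i _ => real_inner_smul_right c (z i) (w i)
        have hstrict : ∑ i ∈ t, w i * ⟪c, z i⟫ < ∑ i ∈ t, w i * ⟪c, p⟫ := by
          apply Finset.sum_lt_sum
          · intro i hi
            exact mul_le_mul_of_nonneg_left (keyle (z i) (hzV i hi)) (hw0 i hi)
          · exact ⟨i₀, hi₀t, by
              have := key (z i₀) (hzV i₀ hi₀t) hzi₀
              exact mul_lt_mul_of_pos_left this hwi₀pos⟩
        have hsum : ∑ i ∈ t, w i * ⟪c, p⟫ = ⟪c, p⟫ := by
          rw [← Finset.sum_mul, hw1, one_mul]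
        rw [hxinner] at hxe
        rw [hsum] at hstrict
        linarith
    refine ⟨subset_convexHull ℝ _ hpV, ?_⟩
    intro x₁ hx₁ x₂ hx₂ hseg
    obtain ⟨a, b, ha, hb, hab, hsum⟩ := hseg
    have h1 := hle x₁ hx₁
    have h2 := hle x₂ hx₂
    have hpin : ⟪c, p⟫ = a * ⟪c, x₁⟫ + b * ⟪c, x₂⟫ := by
      rw [← hsum, inner_add_right, real_inner_smul_right, real_inner_smul_right]
    have hcomb : a * ⟪c, p⟫ + b * ⟪c, p⟫ = ⟪c, p⟫ := by rw [← add_mul, hab, one_mul]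
    have m1 : a * ⟪c, x₁⟫ ≤ a * ⟪c, p⟫ := mul_le_mul_of_nonneg_left h1 ha.le
    have m2 : b * ⟪c, x₂⟫ ≤ b * ⟪c, p⟫ := mul_le_mul_of_nonneg_left h2 hb.le
    have e1 : ⟪c, x₁⟫ = ⟪c, p⟫ := by
      by_contra h'
      have hlt : ⟪c, x₁⟫ < ⟪c, p⟫ := lt_of_le_of_ne h1 h'
      have := mul_lt_mul_of_pos_left hlt ha
      linarith
    have e2 : ⟪c, x₂⟫ = ⟪c, p⟫ := by
      by_contra h'
      have hlt : ⟪c, x₂⟫ < ⟪c, p⟫ := lt_of_le_of_ne h2 h'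
      have := mul_lt_mul_of_pos_left hlt hb
      linarith
    exact uniq x₁ hx₁ e1

end
end

section
/- Let d ≥ 1, let S be a finite set of points in ℝ^d, and let k be an integer with 1 ≤ k ≤ |S|. Suppose A and B are k-element subsets of S such that there exists c ∈ ℝ^d with ⟨c,s⟩ > ⟨c,s'⟩ for every s ∈ A and every s' ∈ S \ A (i.e. A is strictly linearly separable from its complement in S). If B ≠ A, then Σ_{s∈A} s ≠ Σ_{s∈B} s. In particular, the map A ↦ Σ_{s∈A} s is injective on the collection of strictly separable k-element subsets of S. -/
open scoped RealInnerProductSpace Pointwise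
open MeasureTheory

attribute [local instance] Classical.decEq

noncomputable section

/-- If `A` is a strictly linearly separable k-element subset of `S` and `B` is any other
k-element subset of `S`, then `∑_{s ∈ A} s ≠ ∑_{s ∈ B} s`; i.e. the map `A ↦ ∑_{s ∈ A} s`
is injective on strictly separable k-element subsets. -/
theorem sum_injective_on_separable_subsets
    (d : ℕ) (hd : 1 ≤ d) (S : Finset (E d)) (k : ℕ) (hk1 : 1 ≤ k) (hk2 : k ≤ S.card)
    (A B : Finset (E d)) (hAS : A ⊆ S) (hA : A.card = k) (hBS : B ⊆ S) (hB : B.card = k)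
    (hsep : ∃ c : E d, ∀ s ∈ A, ∀ s' ∈ S \ A, ⟪c, s'⟫ < ⟪c, s⟫)
    (hne : B ≠ A) :
    (∑ s ∈ A, s) ≠ ∑ s ∈ B, s := by
  obtain ⟨c, hc⟩ := hsep
  intro h
  -- A\B and B\A are nonempty with equal cards
  have hABne : (A \ B).Nonempty := by
    rw [Finset.sdiff_nonempty]
    intro hsub
    exact hne ((Finset.eq_of_subset_of_card_le hsub (by rw [hA, hB])).symm)
  have hBAne : (B \ A).Nonempty := by
    rw [Finset.sdiff_nonempty]
    intro hsub
    exact hne (Finset.eq_of_subset_of_card_le hsub (by rw [hA, hB]))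
  have hcard : (A \ B).card = (B \ A).card := by
    have h1 := Finset.card_inter_add_card_sdiff A B
    have h2 := Finset.card_inter_add_card_sdiff B A
    rw [Finset.inter_comm] at h2
    omega
  set f : E d → ℝ := fun s => ⟪c, s⟫ with hf
  -- from equality of sums, equality of inner-product sums over sdiffs
  have hsum : ∑ s ∈ A \ B, f s = ∑ s ∈ B \ A, f s := by
    have hA' := Finset.sum_inter_add_sum_sdiff A B f
    have hB' := Finset.sum_inter_add_sum_sdiff B A f
    rw [Finset.inter_comm] at hB'
    have : ∑ s ∈ A, f s = ∑ s ∈ B, f s := by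
      rw [← inner_sum, ← inner_sum, h]
    linarith
  -- strict inequality
  obtain ⟨m, hmmem, hmmax⟩ := Finset.exists_max_image (B \ A) f hBAne
  have hlt : ∀ s ∈ A \ B, f m < f s := by
    intro s hs
    exact hc s (Finset.mem_sdiff.mp hs).1 m
      (Finset.mem_sdiff.mpr ⟨hBS (Finset.mem_sdiff.mp hmmem).1, (Finset.mem_sdiff.mp hmmem).2⟩)
  have h1 : (A \ B).card • f m < ∑ s ∈ A \ B, f s := by
    calc (A \ B).card • f m = ∑ _s ∈ A \ B, f m := (Finset.sum_const _).symm
    _ < ∑ s ∈ A \ B, f s := Finset.sum_lt_sum_of_nonempty hABne hlt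
  have h2 : ∑ s ∈ B \ A, f s ≤ (B \ A).card • f m :=
    Finset.sum_le_card_nsmul _ _ _ hmmax
  rw [hcard] at h1
  linarith

end
end

section
/- Let d ≥ 1, let S be a finite set of N ≥ 1 points in ℝ^d, and let k be an integer with 1 ≤ k < N. Then the affine span of the unordered k-set polytope Q_k(S) has the same dimension as the affine span of S; in particular dim Q_k(S) = dim conv(S). -/
open scoped RealInnerProductSpace Pointwise
open MeasureTheory

attribute [local instance] Classical.decEq

noncomputable section

lemma sum_sub_sum_mem (d : ℕ) (S : Finset (E d)) :
    ∀ (n : ℕ) (A B : Finset (E d)), A ⊆ S → B ⊆ S → A.card = n → B.card = n →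
    (∑ s ∈ A, s) - (∑ s ∈ B, s) ∈ vectorSpan ℝ (S : Set (E d)) := by
  intro n
  induction n with
  | zero =>
      intro A B hA hB hAc hBc
      simp [Finset.card_eq_zero.mp hAc, Finset.card_eq_zero.mp hBc]
  | succ n ih =>
      intro A B hA hB hAc hBc
      by_cases h : A = B
      · simp [h]
      · obtain ⟨a, ha⟩ : (A \ B).Nonempty := by
          rw [Finset.sdiff_nonempty]
          intro hsub
          exact h (Finset.eq_of_subset_of_card_le hsub (by omega))
        obtain ⟨b, hb⟩ : (B \ A).Nonempty := by
          rw [Finset.sdiff_nonempty]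
          intro hsub
          exact h (Finset.eq_of_subset_of_card_le hsub (by omega)).symm
        have haA : a ∈ A := (Finset.mem_sdiff.mp ha).1
        have hbB : b ∈ B := (Finset.mem_sdiff.mp hb).1
        have e1 : (∑ s ∈ A, s) = a + ∑ s ∈ A.erase a, s := (Finset.add_sum_erase _ _ haA).symm
        have e2 : (∑ s ∈ B, s) = b + ∑ s ∈ B.erase b, s := (Finset.add_sum_erase _ _ hbB).symm
        have key : (∑ s ∈ A, s) - (∑ s ∈ B, s) =
            (a - b) + ((∑ s ∈ A.erase a, s) - (∑ s ∈ B.erase b, s)) := by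
          rw [e1, e2]; abel
        rw [key]
        refine Submodule.add_mem _ ?_ (ih (A.erase a) (B.erase b)
          ((Finset.erase_subset _ _).trans hA) ((Finset.erase_subset _ _).trans hB)
          (by rw [Finset.card_erase_of_mem haA, hAc]; omega) (by rw [Finset.card_erase_of_mem hbB, hBc]; omega))
        have := vsub_mem_vectorSpan ℝ (Finset.mem_coe.mpr (hA haA)) (Finset.mem_coe.mpr (hB hbB))
        simpa [vsub_eq_sub] using this

/-- For `1 ≤ k < |S|`, the unordered k-set polytope has the same dimension (dimension of
affine span) as `conv(S)`. -/
theorem dim_unorderedKSetPolytope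
    (d : ℕ) (hd : 1 ≤ d) (S : Finset (E d)) (hS : 1 ≤ S.card)
    (k : ℕ) (hk1 : 1 ≤ k) (hk2 : k < S.card) :
    Module.finrank ℝ (affineSpan ℝ (unorderedKSetPolytope d k S)).direction =
      Module.finrank ℝ (affineSpan ℝ (convexHull ℝ (S : Set (E d)))).direction := by
  set V : Set (E d) := {p | ∃ A : Finset (E d), A ⊆ S ∧ A.card = k ∧ p = ∑ s ∈ A, s} with hVdef
  have h1 : affineSpan ℝ (unorderedKSetPolytope d k S) = affineSpan ℝ V :=
    affineSpan_convexHull V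
  have h2 : affineSpan ℝ (convexHull ℝ (S : Set (E d))) = affineSpan ℝ (S : Set (E d)) :=
    affineSpan_convexHull _
  rw [h1, h2, direction_affineSpan, direction_affineSpan]
  have hVS : vectorSpan ℝ V = vectorSpan ℝ (S : Set (E d)) := by
    apply le_antisymm
    · rw [vectorSpan_def]
      rw [Submodule.span_le]
      rintro z hz
      obtain ⟨x, hx, y, hy, rfl⟩ := Set.mem_vsub.mp hz
      obtain ⟨A, hA, hAc, rfl⟩ := hx
      obtain ⟨B, hB, hBc, rfl⟩ := hy
      have := sum_sub_sum_mem d S k A B hA hB hAc hBc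
      simpa [vsub_eq_sub] using this
    · rw [vectorSpan_def, Submodule.span_le]
      rintro z hz
      obtain ⟨s, hs, t, ht, rfl⟩ := Set.mem_vsub.mp hz
      rw [Finset.mem_coe] at hs ht
      by_cases hst : s = t
      · simp [hst]
      · -- construct A' ⊆ (S.erase t).erase s with card k-1
        obtain ⟨A', hA'sub, hA'card⟩ : ∃ A' ⊆ (S.erase t).erase s, A'.card = k - 1 := by
          apply Finset.exists_subset_card_eq
          rw [Finset.card_erase_of_mem (Finset.mem_erase.mpr ⟨hst, hs⟩),
            Finset.card_erase_of_mem ht]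
          omega
        have hsA' : s ∉ A' := fun hmem => (Finset.mem_erase.mp (hA'sub hmem)).1 rfl
        have htA' : t ∉ A' := fun hmem =>
          (Finset.mem_erase.mp (Finset.mem_of_mem_erase (hA'sub hmem))).1 rfl
        have hA'S : A' ⊆ S := hA'sub.trans ((Finset.erase_subset _ _).trans (Finset.erase_subset _ _))
        have hAmem : (∑ x ∈ insert s A', x) ∈ V :=
          ⟨insert s A', Finset.insert_subset hs hA'S,
            by rw [Finset.card_insert_of_notMem hsA', hA'card]; omega, rfl⟩
        have hBmem : (∑ x ∈ insert t A', x) ∈ V :=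
          ⟨insert t A', Finset.insert_subset ht hA'S,
            by rw [Finset.card_insert_of_notMem htA', hA'card]; omega, rfl⟩
        have := vsub_mem_vectorSpan ℝ hAmem hBmem
        have heq : (∑ x ∈ insert s A', x) -ᵥ (∑ x ∈ insert t A', x) = s -ᵥ t := by
          rw [Finset.sum_insert hsA', Finset.sum_insert htA']
          simp [vsub_eq_sub]
        rwa [heq] at this
  rw [hVS]

end
end

section
/- Let d ≥ 1, let S be a finite set of N ≥ 1 points in ℝ^d, and let k be an integer with 1 ≤ k < N. Then the affine span of the ordered k-set polytope P_k(S) has the same dimension as the affine span of S; in particular dim P_k(S) = dim conv(S). -/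
open scoped RealInnerProductSpace Pointwise
open MeasureTheory

attribute [local instance] Classical.decEq

noncomputable section

/-- For `1 ≤ k < |S|`, the ordered k-set polytope has the same dimension (dimension of
affine span) as `conv(S)`. -/
theorem dim_orderedKSetPolytope
    (d : ℕ) (hd : 1 ≤ d) (S : Finset (E d)) (hS : 1 ≤ S.card)
    (k : ℕ) (hk1 : 1 ≤ k) (hk2 : k < S.card) :
    Module.finrank ℝ (affineSpan ℝ (orderedKSetPolytope d k S)).direction =
      Module.finrank ℝ (affineSpan ℝ (convexHull ℝ (S : Set (E d)))).direction := by
  classical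
  set V : Set (E d) := {p | ∃ σ : Fin k → E d, Function.Injective σ ∧ (∀ i, σ i ∈ S) ∧
    p = ∑ i : Fin k, ((k - (i : ℕ) : ℕ) : ℝ) • σ i} with hVdef
  have hspan : vectorSpan ℝ V = vectorSpan ℝ (S : Set (E d)) := by
    apply le_antisymm
    · rw [vectorSpan_def]
      rw [Submodule.span_le]
      rintro _ ⟨x, hx, y, hy, rfl⟩
      obtain ⟨σ, hσinj, hσmem, rfl⟩ := hx
      obtain ⟨τ, hτinj, hτmem, rfl⟩ := hy
      have : (∑ i : Fin k, ((k - (i : ℕ) : ℕ) : ℝ) • σ i) -ᵥ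
          (∑ i : Fin k, ((k - (i : ℕ) : ℕ) : ℝ) • τ i)
          = ∑ i : Fin k, ((k - (i : ℕ) : ℕ) : ℝ) • (σ i - τ i) := by
        rw [vsub_eq_sub, ← Finset.sum_sub_distrib]
        exact Finset.sum_congr rfl fun i _ => (smul_sub _ _ _).symm
      show (∑ i : Fin k, ((k - (i : ℕ) : ℕ) : ℝ) • σ i) -ᵥ
          (∑ i : Fin k, ((k - (i : ℕ) : ℕ) : ℝ) • τ i) ∈ vectorSpan ℝ (S : Set (E d))
      rw [this]
      refine Submodule.sum_mem _ fun i _ => Submodule.smul_mem _ _ ?_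
      have := vsub_mem_vectorSpan ℝ (Finset.mem_coe.2 (hσmem i)) (Finset.mem_coe.2 (hτmem i))
      simpa [vsub_eq_sub] using this
    · rw [vectorSpan_def, Submodule.span_le]
      rintro _ ⟨s, hs, t, ht, rfl⟩
      by_cases hst : s = t
      · subst hst
        simp only [vsub_self]
        exact Submodule.zero_mem _
      -- construct two vertices differing by s - t
      · have hsA : s ∈ S.erase t := Finset.mem_erase.2 ⟨hst, hs⟩
        have hcard : k - 1 ≤ ((S.erase t).erase s).card := by
          rw [Finset.card_erase_of_mem hsA, Finset.card_erase_of_mem ht]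
          omega
        obtain ⟨B, hB, hBcard⟩ := Finset.exists_subset_card_eq hcard
        have hsB : s ∉ B := fun h => (Finset.mem_erase.1 (hB h)).1 rfl
        set A : Finset (E d) := insert s B with hAdef
        have hAcard : A.card = k := by
          rw [Finset.card_insert_of_notMem hsB, hBcard]; omega
        have hAsub : ∀ x ∈ A, x ∈ S ∧ x ≠ t := by
          intro x hx
          rcases Finset.mem_insert.1 hx with rfl | hx
          · exact ⟨hs, hst⟩
          · have := Finset.mem_erase.1 (hB hx)
            have h2 := Finset.mem_erase.1 this.2
            exact ⟨h2.2, h2.1⟩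
        let e : Fin k ≃ A := (finCongr hAcard.symm).trans A.equivFin.symm
        have hsA' : s ∈ A := Finset.mem_insert_self _ _
        set last : Fin k := ⟨k - 1, by omega⟩ with hlast
        let j : Fin k := e.symm ⟨s, hsA'⟩
        let g : Fin k → E d := fun i => (e (Equiv.swap last j i) : E d)
        have hginj : Function.Injective g :=
          Subtype.coe_injective.comp (e.injective.comp (Equiv.swap last j).injective)
        have hgmem : ∀ i, g i ∈ A := fun i => (e (Equiv.swap last j i)).2
        have hglast : g last = s := by
          show ((e (Equiv.swap last j last) : A) : E d) = s
          rw [Equiv.swap_apply_left]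
          simp [j]
        set g' : Fin k → E d := Function.update g last t with hg'def
        have hg'inj : Function.Injective g' := by
          intro i i' hii'
          by_cases hi : i = last <;> by_cases hi' : i' = last
          · rw [hi, hi']
          · exfalso
            rw [hg'def, hi] at hii'
            rw [Function.update_self, Function.update_of_ne hi'] at hii'
            exact (hAsub _ (hgmem i')).2 hii'.symm
          · exfalso
            rw [hg'def, hi'] at hii'
            rw [Function.update_self, Function.update_of_ne hi] at hii'
            exact (hAsub _ (hgmem i)).2 hii'
          · rw [hg'def, Function.update_of_ne hi, Function.update_of_ne hi'] at hii'
            exact hginj hii'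
        have hx : (∑ i : Fin k, ((k - (i : ℕ) : ℕ) : ℝ) • g i) ∈ V :=
          ⟨g, hginj, fun i => (hAsub _ (hgmem i)).1, rfl⟩
        have hy : (∑ i : Fin k, ((k - (i : ℕ) : ℕ) : ℝ) • g' i) ∈ V := by
          refine ⟨g', hg'inj, fun i => ?_, rfl⟩
          by_cases hi : i = last
          · rw [hg'def, hi, Function.update_self]; exact ht
          · rw [hg'def, Function.update_of_ne hi]
            exact (hAsub _ (hgmem i)).1
        have hdiff : s -ᵥ t = (∑ i : Fin k, ((k - (i : ℕ) : ℕ) : ℝ) • g i) -ᵥ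
            (∑ i : Fin k, ((k - (i : ℕ) : ℕ) : ℝ) • g' i) := by
          rw [vsub_eq_sub, vsub_eq_sub, ← Finset.sum_sub_distrib]
          have : ∀ i : Fin k, ((k - (i : ℕ) : ℕ) : ℝ) • g i - ((k - (i : ℕ) : ℕ) : ℝ) • g' i
              = if i = last then s - t else 0 := by
            intro i
            by_cases hi : i = last
            · rw [if_pos hi, hi, hg'def, Function.update_self, hglast]
              have : (k - ((last : Fin k) : ℕ)) = 1 := by
                simp only [hlast]; omega
              rw [this]
              simp [sub_eq_iff_eq_add, smul_sub]
            · rw [if_neg hi, hg'def, Function.update_of_ne hi, sub_self]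
          rw [Finset.sum_congr rfl fun i _ => this i, Finset.sum_ite_eq' Finset.univ last]
          simp
        show s -ᵥ t ∈ vectorSpan ℝ V
        rw [hdiff]
        exact vsub_mem_vectorSpan ℝ hx hy
  have h1 : affineSpan ℝ (orderedKSetPolytope d k S) = affineSpan ℝ V := by
    rw [orderedKSetPolytope, affineSpan_convexHull]
  rw [h1, affineSpan_convexHull, direction_affineSpan, direction_affineSpan, hspan]


end
end

section
/- Let d ≥ 1, let S be a finite set of points in ℝ^d, and let k be an integer with 1 ≤ k ≤ |S|. Then the ordered k-set polytope equals the Minkowski sum of the unordered j-set polytopes for j = 1, …, k: P_k(S) = Q_1(S) + Q_2(S) + … + Q_k(S), where + denotes Minkowski (elementwise) addition of subsets of ℝ^d. -/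
open scoped RealInnerProductSpace Pointwise
open MeasureTheory

attribute [local instance] Classical.decEq

noncomputable section

/-! ### Auxiliary lemmas -/

lemma aux_convexHull_finsetSum {d : ℕ} {ι : Type*} (t : Finset ι) (G : ι → Set (E d)) :
    convexHull ℝ (∑ j ∈ t, G j) = ∑ j ∈ t, convexHull ℝ (G j) := by
  classical
  induction t using Finset.cons_induction with
  | empty => simp [← Set.singleton_zero]
  | cons a s ha ih => rw [Finset.sum_cons, Finset.sum_cons, convexHull_add, ih]

lemma aux_mem_finsetSum_iff {d : ℕ} {ι : Type*} (t : Finset ι) (G : ι → Set (E d)) (x : E d) :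
    x ∈ ∑ j ∈ t, G j ↔ ∃ g : ι → E d, (∀ j ∈ t, g j ∈ G j) ∧ x = ∑ j ∈ t, g j := by
  classical
  induction t using Finset.cons_induction generalizing x with
  | empty => simp [← Set.singleton_zero, eq_comm]
  | cons a s ha ih =>
    rw [Finset.sum_cons]
    constructor
    · intro hx
      rw [Set.mem_add] at hx
      obtain ⟨y, hy, z, hz, rfl⟩ := hx
      obtain ⟨g, hg, rfl⟩ := (ih z).mp hz
      refine ⟨Function.update g a y, ?_, ?_⟩
      · intro j hj
        rcases Finset.mem_cons.mp hj with rfl | hj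
        · simpa using hy
        · have hne : j ≠ a := fun h => ha (h ▸ hj)
          simpa [Function.update_of_ne hne] using hg j hj
      · rw [Finset.sum_cons, Function.update_self]
        congr 1
        refine Finset.sum_congr rfl fun j hj => ?_
        have hne : j ≠ a := fun h => ha (h ▸ hj)
        simp [Function.update_of_ne hne]
    · rintro ⟨g, hg, rfl⟩
      rw [Finset.sum_cons, Set.mem_add]
      exact ⟨g a, hg a (Finset.mem_cons_self _ _), ∑ j ∈ s, g j,
        (ih _).mpr ⟨g, fun j hj => hg j (Finset.mem_cons_of_mem hj), rfl⟩, rfl⟩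

lemma aux_sum_Icc_range {M : Type*} [AddCommMonoid M] (k : ℕ) (w : ℕ → M) :
    ∑ j ∈ Finset.Icc 1 k, ∑ i ∈ Finset.range j, w i
      = ∑ i ∈ Finset.range k, (k - i) • w i := by
  classical
  have h1 : ∀ j ∈ Finset.Icc 1 k, ∑ i ∈ Finset.range j, w i
      = ∑ i ∈ Finset.range k, if i < j then w i else 0 := by
    intro j hj
    rw [Finset.mem_Icc] at hj
    rw [← Finset.sum_filter]
    congr 1
    ext i
    simp only [Finset.mem_filter, Finset.mem_range]
    omega
  rw [Finset.sum_congr rfl h1, Finset.sum_comm]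
  refine Finset.sum_congr rfl fun i hi => ?_
  rw [Finset.mem_range] at hi
  rw [← Finset.sum_filter]
  have h2 : (Finset.Icc 1 k).filter (fun j => i < j) = Finset.Icc (i + 1) k := by
    ext j; simp only [Finset.mem_filter, Finset.mem_Icc]; omega
  rw [h2, Finset.sum_const, Nat.card_Icc]
  congr 1
  omega

lemma aux_le_orderEmb {m : ℕ} (e : Fin m ↪o ℕ) (i : Fin m) : (i : ℕ) ≤ e i := by
  have H : ∀ v (hv : v < m), v ≤ e ⟨v, hv⟩ := by
    intro v
    induction v with
    | zero => intro hv; exact Nat.zero_le _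
    | succ n ih =>
      intro hv
      have h' : n < m := Nat.lt_of_succ_lt hv
      have h2 : e ⟨n, h'⟩ < e ⟨n + 1, hv⟩ := e.strictMono (by simp [Fin.lt_def])
      have h3 := ih h'
      omega
  simpa using H i i.isLt

lemma aux_sum_top (g : ℕ → ℝ) (n : ℕ) (hg : ∀ i j, i ≤ j → j < n → g j ≤ g i)
    (T : Finset ℕ) (hT : ∀ t ∈ T, t < n) :
    ∑ t ∈ T, g t ≤ ∑ i ∈ Finset.range T.card, g i := by
  classical
  set m := T.card with hm
  set e : Fin m ↪o ℕ := T.orderEmbOfFin hm.symm with he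
  have hemem : ∀ i : Fin m, e i ∈ T := fun i => Finset.orderEmbOfFin_mem T hm.symm i
  have himg : Finset.image (fun i : Fin m => e i) Finset.univ = T := by
    apply Finset.eq_of_subset_of_card_le
    · intro x hx
      obtain ⟨i, _, rfl⟩ := Finset.mem_image.mp hx
      exact hemem i
    · rw [Finset.card_image_of_injective _ e.injective, Finset.card_univ, Fintype.card_fin]
  calc ∑ t ∈ T, g t = ∑ i : Fin m, g (e i) := by
        rw [← himg, Finset.sum_image (fun x _ y _ h => e.injective h)]
    _ ≤ ∑ i : Fin m, g (i : ℕ) := by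
        refine Finset.sum_le_sum fun i _ => hg i (e i) (aux_le_orderEmb e i) (hT _ (hemem i))
    _ = ∑ i ∈ Finset.range m, g i := Fin.sum_univ_eq_sum_range _ _

/-- The ordered k-set polytope is the Minkowski sum of the unordered j-set polytopes,
`P_k(S) = Q_1(S) + Q_2(S) + … + Q_k(S)`. -/
theorem orderedKSetPolytope_eq_minkowski_sum
    (d : ℕ) (hd : 1 ≤ d) (S : Finset (E d)) (k : ℕ) (hk1 : 1 ≤ k) (hk2 : k ≤ S.card) :
    orderedKSetPolytope d k S = ∑ j ∈ Finset.Icc 1 k, unorderedKSetPolytope d j S := by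
  classical
  apply Set.Subset.antisymm
  · -- P ⊆ sum of Q's
    have hRHS : ∑ j ∈ Finset.Icc 1 k, unorderedKSetPolytope d j S
        = convexHull ℝ (∑ j ∈ Finset.Icc 1 k,
            {p : E d | ∃ A : Finset (E d), A ⊆ S ∧ A.card = j ∧ p = ∑ s ∈ A, s}) := by
      rw [aux_convexHull_finsetSum]; rfl
    rw [hRHS, orderedKSetPolytope]
    apply convexHull_mono
    rintro p ⟨σ, hinj, hmemS, rfl⟩
    rw [aux_mem_finsetSum_iff]
    set σ' : ℕ → E d := fun n => if h : n < k then σ ⟨n, h⟩ else 0 with hσ'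
    have hσ'inj : ∀ i₁, i₁ < k → ∀ i₂, i₂ < k → σ' i₁ = σ' i₂ → i₁ = i₂ := by
      intro i₁ h₁ i₂ h₂ h
      simp only [hσ', dif_pos h₁, dif_pos h₂] at h
      simpa [Fin.ext_iff] using congrArg Fin.val (hinj h)
    refine ⟨fun j => ∑ i ∈ Finset.range j, σ' i, ?_, ?_⟩
    · intro j hj
      rw [Finset.mem_Icc] at hj
      refine ⟨(Finset.range j).image σ', ?_, ?_, ?_⟩
      · intro a ha
        obtain ⟨i, hi, rfl⟩ := Finset.mem_image.mp ha
        rw [Finset.mem_range] at hi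
        have hik : i < k := lt_of_lt_of_le hi hj.2
        simp only [hσ', dif_pos hik]
        exact hmemS _
      · have hinj' : Set.InjOn σ' (Finset.range j) := by
          intro i₁ h₁ i₂ h₂ h
          rw [Finset.mem_coe, Finset.mem_range] at h₁ h₂
          exact hσ'inj i₁ (lt_of_lt_of_le h₁ hj.2) i₂ (lt_of_lt_of_le h₂ hj.2) h
        have hc := Finset.card_image_of_injOn (f := σ') hinj'
        rw [hc, Finset.card_range]
      · refine (Finset.sum_image (f := fun x => x) (g := σ') (s := Finset.range j) ?_).symm
        intro i₁ h₁ i₂ h₂ h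
        rw [Finset.mem_coe, Finset.mem_range] at h₁ h₂
        exact hσ'inj i₁ (lt_of_lt_of_le h₁ hj.2) i₂ (lt_of_lt_of_le h₂ hj.2) h
    · rw [aux_sum_Icc_range k σ',
        ← Fin.sum_univ_eq_sum_range (fun i => (k - i) • σ' i) k]
      refine Finset.sum_congr rfl fun i _ => ?_
      simp only [hσ', dif_pos i.isLt]
      rw [Nat.cast_smul_eq_nsmul]
  · -- sum of Q's ⊆ P
    intro x hx
    by_contra hxP
    have hGpfin : Set.Finite {p : E d | ∃ σ : Fin k → E d, Function.Injective σ ∧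
        (∀ i, σ i ∈ S) ∧ p = ∑ i : Fin k, ((k - (i : ℕ) : ℕ) : ℝ) • σ i} := by
      have hsub : {p : E d | ∃ σ : Fin k → E d, Function.Injective σ ∧
          (∀ i, σ i ∈ S) ∧ p = ∑ i : Fin k, ((k - (i : ℕ) : ℕ) : ℝ) • σ i} ⊆
          (fun σ : Fin k → {a // a ∈ S} =>
            ∑ i : Fin k, ((k - (i : ℕ) : ℕ) : ℝ) • (σ i : E d)) '' Set.univ := by
        rintro p ⟨σ, hinj, hmem, rfl⟩
        exact ⟨fun i => ⟨σ i, hmem i⟩, Set.mem_univ _, rfl⟩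
      exact Set.Finite.subset (Set.finite_univ.image _) hsub
    obtain ⟨f, u, hfP, hfxu⟩ := geometric_hahn_banach_closed_point
      (s := orderedKSetPolytope d k S) (convex_convexHull ℝ _)
      (hGpfin.isClosed_convexHull (𝕜 := ℝ)) hxP
    rw [aux_mem_finsetSum_iff] at hx
    obtain ⟨g, hg, rfl⟩ := hx
    -- sort S in decreasing order of f
    set l : List (E d) := S.toList.mergeSort (fun a b => decide (f b ≤ f a)) with hl
    have hperm : l.Perm S.toList := List.mergeSort_perm _ _
    have hlen : l.length = S.card := by rw [hperm.length_eq, Finset.length_toList]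
    have hnd : l.Nodup := hperm.nodup_iff.mpr S.nodup_toList
    have hmeml : ∀ a, a ∈ l → a ∈ S := fun a h => Finset.mem_toList.mp (hperm.mem_iff.mp h)
    have hmeml' : ∀ a, a ∈ S → a ∈ l := fun a h => hperm.mem_iff.mpr (Finset.mem_toList.mpr h)
    have hsorted : l.Pairwise (fun a b => f b ≤ f a) := by
      have h := List.pairwise_mergeSort (le := fun a b : E d => decide (f b ≤ f a))
        (fun a b c h1 h2 => by
          simp only [decide_eq_true_eq] at *; exact le_trans h2 h1)
        (fun a b => by simpa using le_total (f b) (f a)) S.toList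
      exact h.imp fun h => of_decide_eq_true h
    set gval : ℕ → ℝ := fun n => f (l.getD n 0) with hgval
    have hgv : ∀ (n : ℕ) (h : n < l.length), gval n = f (l[n]) := by
      intro n h
      simp only [hgval]
      rw [List.getD_eq_getElem l 0 h]
    have hanti : ∀ i j, i ≤ j → j < l.length → gval j ≤ gval i := by
      intro i j hij hj
      rcases eq_or_lt_of_le hij with rfl | h
      · exact le_rfl
      · have h2 := hsorted.rel_get_of_lt (a := ⟨i, lt_of_le_of_lt hij hj⟩) (b := ⟨j, hj⟩)
          (by simpa [Fin.lt_def] using h)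
        simp only [List.get_eq_getElem] at h2
        rw [hgv i (lt_of_le_of_lt hij hj), hgv j hj]
        exact h2
    have hconv : ConvexOn ℝ Set.univ f := ⟨convex_univ, fun x _ y _ a b _ _ _ => by
      rw [map_add, f.map_smul, f.map_smul]⟩
    have key : ∀ j ∈ Finset.Icc 1 k, f (g j) ≤ ∑ i ∈ Finset.range j, gval i := by
      intro j hj
      obtain ⟨y, hy, hfy⟩ := hconv.exists_ge_of_mem_convexHull (Set.subset_univ _) (hg j hj)
      obtain ⟨A, hAS, hAcard, rfl⟩ := hy
      have hAl : ∀ a ∈ A, a ∈ l := fun a ha => hmeml' a (hAS ha)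
      have hinjA : ∀ a ∈ A, ∀ b ∈ A, l.idxOf a = l.idxOf b → a = b :=
        fun a ha b hb h => (List.idxOf_inj (hAl a ha)).mp h
      have hTcard : (A.image fun a => l.idxOf a).card = j := by
        rw [Finset.card_image_of_injOn fun a ha b hb h => hinjA a ha b hb h, hAcard]
      calc f (g j) ≤ f (∑ a ∈ A, a) := hfy
        _ = ∑ a ∈ A, f a := map_sum f _ _
        _ = ∑ t ∈ A.image (fun a => l.idxOf a), gval t := by
            rw [Finset.sum_image hinjA]
            refine Finset.sum_congr rfl fun a ha => ?_
            have hlt : l.idxOf a < l.length := List.idxOf_lt_length_iff.mpr (hAl a ha)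
            rw [hgv _ hlt, List.getElem_idxOf hlt]
        _ ≤ ∑ i ∈ Finset.range (A.image fun a => l.idxOf a).card, gval i := by
            refine aux_sum_top gval l.length hanti _ ?_
            intro t ht
            obtain ⟨a, ha, rfl⟩ := Finset.mem_image.mp ht
            exact List.idxOf_lt_length_iff.mpr (hAl a ha)
        _ = ∑ i ∈ Finset.range j, gval i := by rw [hTcard]
    have hklen : k ≤ l.length := by omega
    set σ : Fin k → E d := fun i => l.get ⟨i, lt_of_lt_of_le i.isLt hklen⟩ with hσ
    have hσinj : Function.Injective σ := by
      intro i₁ i₂ h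
      have h2 := List.nodup_iff_injective_get.mp hnd h
      simpa [Fin.ext_iff] using congrArg Fin.val h2
    have hσS : ∀ i, σ i ∈ S := fun i => hmeml _ (l.get_mem _)
    have hp0 : (∑ i : Fin k, ((k - (i : ℕ) : ℕ) : ℝ) • σ i) ∈ orderedKSetPolytope d k S :=
      subset_convexHull ℝ _ ⟨σ, hσinj, hσS, rfl⟩
    have hfp0 : f (∑ i : Fin k, ((k - (i : ℕ) : ℕ) : ℝ) • σ i)
        = ∑ i ∈ Finset.range k, (k - i) • gval i := by
      rw [map_sum, ← Fin.sum_univ_eq_sum_range (fun i => (k - i) • gval i) k]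
      refine Finset.sum_congr rfl fun i _ => ?_
      have hlt : (i : ℕ) < l.length := lt_of_lt_of_le i.isLt hklen
      rw [f.map_smul, Nat.cast_smul_eq_nsmul]
      congr 1
      rw [hgv _ hlt]
      simp [hσ]
    have h1 : f (∑ j ∈ Finset.Icc 1 k, g j)
        ≤ ∑ j ∈ Finset.Icc 1 k, ∑ i ∈ Finset.range j, gval i := by
      rw [map_sum]; exact Finset.sum_le_sum key
    rw [aux_sum_Icc_range, ← hfp0] at h1
    have h2 := hfP _ hp0
    linarith

end
end
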